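/- Let μ and μ' be Borel probability measures on the torus, m₁, m₂ ≥ 2 partition factors, and l, n positive integers with m₁^n ≤ m₂^l < m₁^{n+1}. Then |H^{m₂}_l(μ')/(l log m₂) − H^{m₁}_n(μ')/(n log m₁)| ≤ 2/n. -/

import Mathlib

open MeasureTheory Filter Topology Real
open scoped ENNReal

noncomputable section

abbrev Cantor := ℕ → Bool

/-- `j`-fold left shift of a binary sequence. -/
def shiftk (x : Cantor) (j : ℕ) : Cantor := fun i => x (i + j)

/-- the left shift `T`. -/
def Tshift (x : Cantor) : Cantor := fun i => x (i + 1)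

/-- binary evaluation map `v`. -/
noncomputable def eval (x : Cantor) : ℝ := ∑' i : ℕ, if x i then ((2:ℝ) ^ (i + 1))⁻¹ else 0

noncomputable def negMulLog2 (p : ℝ) : ℝ := - p * Real.logb 2 p

/-- sliding count probability of a word `w` of length `l` in the prefix `x_0^{n-1}`. -/
noncomputable def slidingP (x : Cantor) (n l : ℕ) (w : Fin l → Bool) : ℝ :=
  (((Finset.range (n - l + 1)).filter (fun i => ∀ j : Fin l, x (i + (j : ℕ)) = w j)).card : ℝ)
    / ((n - l + 1 : ℕ) : ℝ)

/-- sliding block entropy `H_l(x_0^{n-1})`. -/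
noncomputable def slidingH (x : Cantor) (n l : ℕ) : ℝ :=
  (1 / (l : ℝ)) * ∑ w : Fin l → Bool, negMulLog2 (slidingP x n l w)

/-- disjoint block probability `P^d`. -/
noncomputable def disjP (x : Cantor) (n l : ℕ) (w : Fin l → Bool) : ℝ :=
  (((Finset.range (n / l)).filter (fun i => ∀ j : Fin l, x (l * i + (j : ℕ)) = w j)).card : ℝ)
    / ((n / l : ℕ) : ℝ)

/-- disjoint block entropy `H^d_l(x_0^{n-1})`. -/
noncomputable def disjH (x : Cantor) (n l : ℕ) : ℝ :=
  (1 / (l : ℝ)) * ∑ w : Fin l → Bool, negMulLog2 (disjP x n l w)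

/-- finite-state dimension via sliding block entropies. -/
noncomputable def dimFS (x : Cantor) : ℝ :=
  ⨅ l : ℕ, Filter.liminf (fun n => slidingH x n (l + 1)) Filter.atTop

/-- finite-state strong dimension. -/
noncomputable def DimFS (x : Cantor) : ℝ :=
  ⨅ l : ℕ, Filter.limsup (fun n => slidingH x n (l + 1)) Filter.atTop

/-- cylinder set. -/
def Cyl (l : ℕ) (w : Fin l → Bool) : Set Cantor := {y | ∀ j : Fin l, y (j : ℕ) = w j}

/-- empirical measures `ν_n = n⁻¹ ∑_{j<n} δ_{T^j x}` on Cantor space. -/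
noncomputable def empMeas (x : Cantor) (n : ℕ) : Measure Cantor :=
  (n : ℝ≥0∞)⁻¹ • ∑ j ∈ Finset.range n, Measure.dirac (shiftk x j)

/-- weak convergence of a sequence of measures. -/
def WeakConv {α : Type*} [TopologicalSpace α] [MeasurableSpace α]
    (ν : ℕ → Measure α) (μ : Measure α) : Prop :=
  ∀ f : BoundedContinuousFunction α ℂ,
    Tendsto (fun n => ∫ y, f y ∂(ν n)) atTop (nhds (∫ y, f y ∂μ))

/-- block entropy `H_n(μ)` of a measure on Cantor space. -/
noncomputable def measH (μ : Measure Cantor) (n : ℕ) : ℝ :=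
  ∑ w : Fin n → Bool, negMulLog2 ((μ (Cyl n w)).toReal)

/-- lower average entropy. -/
noncomputable def Hminus (μ : Measure Cantor) : ℝ :=
  Filter.liminf (fun n => measH μ n / n) Filter.atTop

/-- upper average entropy. -/
noncomputable def Hplus (μ : Measure Cantor) : ℝ :=
  Filter.limsup (fun n => measH μ n / n) Filter.atTop

/-- set of subsequence weak limits of the empirical measures of `x`. -/
def Wx (x : Cantor) : Set (Measure Cantor) :=
  {μ | IsProbabilityMeasure μ ∧
      ∃ φ : ℕ → ℕ, StrictMono φ ∧ (∀ m, 0 < φ m) ∧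
        WeakConv (fun m => empMeas x (φ m)) μ}

/-- normality of a binary sequence. -/
def IsNormal (x : Cantor) : Prop :=
  ∀ (l : ℕ) (w : Fin l → Bool),
    Tendsto (fun n => slidingP x n l w) atTop (nhds (((2:ℝ) ^ l)⁻¹))

/-- Weyl averages `(1/n) ∑_{j<n} e^{2πik v(T^j x)}`. -/
noncomputable def weylAvg (x : Cantor) (k : ℤ) (n : ℕ) : ℂ :=
  (n : ℂ)⁻¹ * ∑ j ∈ Finset.range n,
    Complex.exp (2 * (Real.pi : ℂ) * Complex.I * (k : ℂ) * ((eval (shiftk x j) : ℝ) : ℂ))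

/-- Weyl averages on the torus, `(1/n) ∑_{j<n} e^{2πik 2^j r}`. -/
noncomputable def weylAvgT (r : ℝ) (k : ℤ) (n : ℕ) : ℂ :=
  (n : ℂ)⁻¹ * ∑ j ∈ Finset.range n,
    Complex.exp (2 * (Real.pi : ℂ) * Complex.I * (k : ℂ) * (((2:ℝ) ^ j * r : ℝ) : ℂ))

/-- empirical measures `(1/n) ∑_{j<n} δ_{2^j r mod 1}` on the torus. -/
noncomputable def empMeasT (r : ℝ) (n : ℕ) : Measure UnitAddCircle :=
  (n : ℝ≥0∞)⁻¹ • ∑ j ∈ Finset.range n, Measure.dirac (((2:ℝ) ^ j * r : ℝ) : UnitAddCircle)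

/-- dyadic interval `[j/2^k, (j+1)/2^k)` on the torus. -/
def dyadicI (k j : ℕ) : Set UnitAddCircle :=
  (fun t : ℝ => (t : UnitAddCircle)) '' Set.Ico ((j : ℝ) / 2 ^ k) (((j : ℝ) + 1) / 2 ^ k)

/-- a real number is a dyadic rational. -/
def IsDyadic (t : ℝ) : Prop := ∃ (a : ℤ) (n : ℕ), t = (a : ℝ) / 2 ^ n

/-- value of a finite binary word. -/
noncomputable def val2 (l : ℕ) (w : Fin l → Bool) : ℝ :=
  ∑ j : Fin l, if w j then ((2:ℝ) ^ ((j : ℕ) + 1))⁻¹ else 0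

/-- dyadic interval `I_w` on the torus. -/
def IwT (l : ℕ) (w : Fin l → Bool) : Set UnitAddCircle :=
  (fun t : ℝ => (t : UnitAddCircle)) '' Set.Ico (val2 l w) (val2 l w + ((2:ℝ) ^ l)⁻¹)

/-- value of a finite base-`m` word. -/
noncomputable def valm (m n : ℕ) (w : Fin n → Fin m) : ℝ :=
  ∑ j : Fin n, ((w j : ℕ) : ℝ) / (m : ℝ) ^ ((j : ℕ) + 1)

/-- base-`m` interval `I^m_w` on the torus. -/
def ImT (m n : ℕ) (w : Fin n → Fin m) : Set UnitAddCircle :=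
  (fun t : ℝ => (t : UnitAddCircle)) '' Set.Ico (valm m n w) (valm m n w + ((m : ℝ) ^ n)⁻¹)

/-- base-`m` partition entropy `H^m_n(μ)` (natural logarithm). -/
noncomputable def measHT (μ : Measure UnitAddCircle) (m n : ℕ) : ℝ :=
  ∑ w : Fin n → Fin m, Real.negMulLog ((μ (ImT m n w)).toReal)

/-- lower Rényi dimension w.r.t. partition factor `m`. -/
noncomputable def renyiLower (μ : Measure UnitAddCircle) (m : ℕ) : ℝ :=
  Filter.liminf (fun n => measHT μ m n / (n * Real.log m)) Filter.atTop

/-- upper Rényi dimension w.r.t. partition factor `m`. -/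
noncomputable def renyiUpper (μ : Measure UnitAddCircle) (m : ℕ) : ℝ :=
  Filter.limsup (fun n => measHT μ m n / (n * Real.log m)) Filter.atTop

namespace RenyiAux


/-- Subadditivity of `negMulLog` over finite sums. -/
lemma negMulLog_sum_le {κ : Type*} [Fintype κ] (f : κ → ℝ) (hf : ∀ j, 0 ≤ f j) :
    Real.negMulLog (∑ j, f j) ≤ ∑ j, Real.negMulLog (f j) := by
  classical
  set p := ∑ j, f j with hp
  have hp0 : 0 ≤ p := Finset.sum_nonneg fun j _ => hf j
  have hrw : Real.negMulLog p = ∑ j, -f j * Real.log p := by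
    rw [Real.negMulLog, hp, ← Finset.sum_neg_distrib, Finset.sum_mul]
  rw [hrw]
  refine Finset.sum_le_sum fun j _ => ?_
  rcases eq_or_lt_of_le (hf j) with h0 | h0
  · simp [← h0]
  · have hfp : f j ≤ p := Finset.single_le_sum (fun i _ => hf i) (Finset.mem_univ j)
    have : Real.log (f j) ≤ Real.log p := Real.log_le_log h0 hfp
    have := mul_le_mul_of_nonneg_left this (le_of_lt h0)
    rw [Real.negMulLog]
    nlinarith

/-- Maximum-entropy style bound: a nonnegative vector with at most `K` nonzero entries. -/
lemma sum_negMulLog_le_of_card {κ : Type*} [Fintype κ] (f : κ → ℝ) (hf : ∀ j, 0 ≤ f j)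
    (K : ℝ) (hK : 1 ≤ K)
    (hsupp : ((Finset.univ.filter fun j => f j ≠ 0).card : ℝ) ≤ K) :
    ∑ j, Real.negMulLog (f j) ≤ Real.negMulLog (∑ j, f j) + (∑ j, f j) * Real.log K := by
  classical
  set s := Finset.univ.filter (fun j => f j ≠ 0) with hs
  set p := ∑ j, f j with hp
  have hK0 : (0:ℝ) < K := lt_of_lt_of_le one_pos hK
  have hps : ∑ j ∈ s, f j = p := by
    rw [hp, hs]; exact Finset.sum_filter_ne_zero _
  have hLHS : ∑ j, Real.negMulLog (f j) = ∑ j ∈ s, Real.negMulLog (f j) := by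
    refine (Finset.sum_subset (Finset.filter_subset _ _) ?_).symm
    intro x _ hx
    simp only [Finset.mem_filter, Finset.mem_univ, true_and, not_not] at hx
    rw [hx, Real.negMulLog_zero]
  have hp0 : 0 ≤ p := Finset.sum_nonneg fun j _ => hf j
  rcases eq_or_lt_of_le hp0 with hzero | hpos
  · -- p = 0, all entries vanish
    have hall : ∀ j ∈ (Finset.univ : Finset κ), f j = 0 :=
      (Finset.sum_eq_zero_iff_of_nonneg (fun j _ => hf j)).mp hzero.symm
    have : ∀ j, Real.negMulLog (f j) = 0 := fun j => by
      rw [hall j (Finset.mem_univ j), Real.negMulLog_zero]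
    simp [this, ← hzero, Real.negMulLog_zero]
  · -- p > 0
    have hterm : ∀ j ∈ s, Real.negMulLog (f j)
        ≤ -f j * Real.log p + f j * Real.log K + (p / K - f j) := by
      intro j hj
      have hfj : f j ≠ 0 := (Finset.mem_filter.mp hj).2
      have hfj0 : 0 < f j := lt_of_le_of_ne (hf j) (Ne.symm hfj)
      have hx : 0 < p / (f j * K) := by positivity
      have hlog : Real.log (p / (f j * K)) ≤ p / (f j * K) - 1 :=
        Real.log_le_sub_one_of_pos hx
      have hlogexp : Real.log (p / (f j * K)) = Real.log p - Real.log (f j) - Real.log K := by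
        rw [Real.log_div (ne_of_gt hpos) (by positivity), Real.log_mul hfj (ne_of_gt hK0)]
        ring
      rw [hlogexp] at hlog
      have := mul_le_mul_of_nonneg_left hlog (le_of_lt hfj0)
      have hfx : f j * (p / (f j * K)) = p / K := by field_simp
      rw [Real.negMulLog]
      nlinarith [this, hfx]
    have hsum := Finset.sum_le_sum hterm
    have hRHSsum : ∑ j ∈ s, (-f j * Real.log p + f j * Real.log K + (p / K - f j))
        = -p * Real.log p + p * Real.log K + ((s.card : ℝ) * (p / K) - p) := by
      have e1 : ∑ j ∈ s, -f j * Real.log p = -p * Real.log p := by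
        rw [← Finset.sum_mul, Finset.sum_neg_distrib, hps]
      have e2 : ∑ j ∈ s, f j * Real.log K = p * Real.log K := by
        rw [← Finset.sum_mul, hps]
      have e3 : ∑ j ∈ s, (p / K - f j) = (s.card : ℝ) * (p / K) - p := by
        rw [Finset.sum_sub_distrib, Finset.sum_const, hps, nsmul_eq_mul]
      rw [Finset.sum_add_distrib, Finset.sum_add_distrib, e1, e2, e3]
    have hcard : (s.card : ℝ) * (p / K) ≤ p := by
      have h1 : (s.card : ℝ) * (p / K) ≤ K * (p / K) :=
        mul_le_mul_of_nonneg_right hsupp (by positivity)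
      have h2 : K * (p / K) = p := by field_simp
      linarith
    rw [hLHS]
    rw [hRHSsum] at hsum
    rw [Real.negMulLog]
    linarith

/-- Core comparison. -/
lemma entropy_compare {ι κ : Type*} [Fintype ι] [Fintype κ]
    (r : ι → κ → ℝ) (hr : ∀ i j, 0 ≤ r i j)
    (K : ℝ) (hK : 1 ≤ K)
    (hsupp : ∀ i, ((Finset.univ.filter fun j => r i j ≠ 0).card : ℝ) ≤ K) :
    ∑ j, Real.negMulLog (∑ i, r i j)
      ≤ ∑ i, (Real.negMulLog (∑ j, r i j) + (∑ j, r i j) * Real.log K) := by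
  calc ∑ j, Real.negMulLog (∑ i, r i j) ≤ ∑ j, ∑ i, Real.negMulLog (r i j) :=
        Finset.sum_le_sum fun j _ => negMulLog_sum_le _ (fun i => hr i j)
    _ = ∑ i, ∑ j, Real.negMulLog (r i j) := Finset.sum_comm
    _ ≤ _ := Finset.sum_le_sum fun i _ => sum_negMulLog_le_of_card _ (hr i) K hK (hsupp i)


/-! ### Intervals `[i/N, (i+1)/N)` -/

def Jint (N i : ℕ) : Set ℝ := Set.Ico ((i : ℝ) / N) (((i : ℝ) + 1) / N)

lemma Jint_subset {N : ℕ} (hN : 0 < N) {i : ℕ} (hi : i < N) :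
    Jint N i ⊆ Set.Ico (0 : ℝ) 1 := by
  intro t ht
  obtain ⟨ht1, ht2⟩ := ht
  have hN' : (0 : ℝ) < N := by exact_mod_cast hN
  refine ⟨le_trans (by positivity) ht1, lt_of_lt_of_le ht2 ?_⟩
  rw [div_le_one hN']
  exact_mod_cast hi

lemma Jint_cover {N : ℕ} (hN : 0 < N) :
    Set.Ico (0 : ℝ) 1 ⊆ ⋃ j : Fin N, Jint N (j : ℕ) := by
  rintro t ⟨ht0, ht1⟩
  have hN' : (0 : ℝ) < N := by exact_mod_cast hN
  have htN : (0 : ℝ) ≤ t * N := by positivity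
  set j := ⌊t * N⌋₊ with hj
  have hjN : j < N := by
    have h1 : t * N < N := by nlinarith
    exact_mod_cast (Nat.floor_lt htN).mpr (by exact_mod_cast h1)
  refine Set.mem_iUnion.mpr ⟨⟨j, hjN⟩, ?_, ?_⟩
  · rw [div_le_iff₀ hN']
    exact Nat.floor_le htN
  · rw [lt_div_iff₀ hN']
    exact_mod_cast Nat.lt_floor_add_one (t * N)

lemma Jint_disjoint {N : ℕ} {i j : Fin N} (hij : i ≠ j) :
    Disjoint (Jint N (i : ℕ)) (Jint N (j : ℕ)) := by
  rcases Nat.lt_or_ge N 1 with h | h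
  · interval_cases N; exact absurd (Subsingleton.elim i j) hij
  have hN' : (0 : ℝ) < N := by exact_mod_cast h
  rw [Jint, Jint, Set.Ico_disjoint_Ico]
  rcases lt_or_gt_of_ne (fun hv => hij (Fin.ext hv) : (i : ℕ) ≠ (j : ℕ)) with hlt | hlt
  · refine le_trans (min_le_left _ _) (le_trans ?_ (le_max_right _ _))
    rw [div_le_div_iff₀ hN' hN']
    have : (i : ℕ) + 1 ≤ (j : ℕ) := hlt
    have : ((i : ℕ) : ℝ) + 1 ≤ ((j : ℕ) : ℝ) := by exact_mod_cast this
    nlinarith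
  · refine le_trans (min_le_right _ _) (le_trans ?_ (le_max_left _ _))
    rw [div_le_div_iff₀ hN' hN']
    have : (j : ℕ) + 1 ≤ (i : ℕ) := hlt
    have : ((j : ℕ) : ℝ) + 1 ≤ ((i : ℕ) : ℝ) := by exact_mod_cast this
    nlinarith

lemma Jint_measurable {N i : ℕ} : MeasurableSet (Jint N i) := measurableSet_Ico

lemma measure_eq_sum_inter (ν : Measure ℝ) {S : Set ℝ} (hS : MeasurableSet S)
    (hsub : S ⊆ Set.Ico (0 : ℝ) 1) {N : ℕ} (hN : 0 < N) :
    ν S = ∑ j : Fin N, ν (S ∩ Jint N (j : ℕ)) := by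
  have hU : S = ⋃ j : Fin N, S ∩ Jint N (j : ℕ) := by
    ext t
    simp only [Set.mem_iUnion, Set.mem_inter_iff]
    constructor
    · intro ht
      obtain ⟨j, hj⟩ := Set.mem_iUnion.mp (Jint_cover hN (hsub ht))
      exact ⟨j, ht, hj⟩
    · rintro ⟨j, ht, _⟩; exact ht
  conv_lhs => rw [hU]
  rw [measure_iUnion ?_ (fun j => hS.inter Jint_measurable), tsum_fintype]
  intro i j hij
  exact Disjoint.mono Set.inter_subset_right Set.inter_subset_right (Jint_disjoint hij)

/-- window/counting lemma -/
lemma window {N₁ N₂ c : ℕ} (hN₁ : 0 < N₁) (hN₂ : 0 < N₂) (hcc : N₂ ≤ c * N₁)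
    {i j : ℕ} (h : (Jint N₁ i ∩ Jint N₂ j).Nonempty) :
    i * N₂ / N₁ ≤ j ∧ j ≤ i * N₂ / N₁ + c := by
  obtain ⟨t, ⟨h11, h12⟩, h21, h22⟩ := h
  have hN₁' : (0 : ℝ) < N₁ := by exact_mod_cast hN₁
  have hN₂' : (0 : ℝ) < N₂ := by exact_mod_cast hN₂
  have hA : (i : ℝ) * N₂ < ((j : ℝ) + 1) * N₁ := by
    have := lt_of_le_of_lt h11 h22
    rwa [div_lt_div_iff₀ hN₁' hN₂'] at this
  have hB : (j : ℝ) * N₁ < ((i : ℝ) + 1) * N₂ := by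
    have := lt_of_le_of_lt h21 h12
    rwa [div_lt_div_iff₀ hN₂' hN₁'] at this
  have hA' : i * N₂ < (j + 1) * N₁ := by exact_mod_cast hA
  have hB' : j * N₁ < (i + 1) * N₂ := by exact_mod_cast hB
  set j₀ := i * N₂ / N₁ with hj₀
  have h1 : j₀ * N₁ ≤ i * N₂ := Nat.div_mul_le_self _ _
  have h2 : i * N₂ < (j₀ + 1) * N₁ := (Nat.div_lt_iff_lt_mul hN₁).mp (Nat.lt_succ_self j₀)
  constructor
  · by_contra hcon
    push_neg at hcon
    have hj1 : j + 1 ≤ j₀ := hcon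
    have : (j + 1) * N₁ ≤ j₀ * N₁ := Nat.mul_le_mul_right _ hj1
    exact absurd hA' (not_lt.mpr (le_trans this h1))
  · by_contra hcon
    push_neg at hcon
    have e1 : (j₀ + c + 1) * N₁ ≤ j * N₁ := Nat.mul_le_mul_right _ (by omega)
    have : (j₀ + c + 1) * N₁ < (j₀ + c + 1) * N₁ := calc
      (j₀ + c + 1) * N₁ ≤ j * N₁ := e1
      _ < (i + 1) * N₂ := hB'
      _ = i * N₂ + N₂ := by ring
      _ ≤ i * N₂ + c * N₁ := by omega
      _ < (j₀ + 1) * N₁ + c * N₁ := by exact Nat.add_lt_add_right h2 _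
      _ = (j₀ + c + 1) * N₁ := by ring
    exact absurd this (lt_irrefl _)


/-! ### Partition entropy on `ℝ` -/

noncomputable def entN (ν : Measure ℝ) (N : ℕ) : ℝ :=
  ∑ i : Fin N, Real.negMulLog ((ν (Jint N (i : ℕ))).toReal)

lemma sum_Jint_toReal (ν : Measure ℝ) [IsFiniteMeasure ν]
    (hν : ν (Set.Ico (0 : ℝ) 1) = 1) {N : ℕ} (hN : 0 < N) :
    ∑ i : Fin N, (ν (Jint N (i : ℕ))).toReal = 1 := by
  have h := measure_eq_sum_inter ν measurableSet_Ico (Set.Subset.rfl) hN (S := Set.Ico (0:ℝ) 1)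
  have h2 : ∀ j : Fin N, Set.Ico (0 : ℝ) 1 ∩ Jint N (j : ℕ) = Jint N (j : ℕ) := fun j =>
    Set.inter_eq_self_of_subset_right (Jint_subset hN j.isLt)
  simp only [h2] at h
  rw [hν] at h
  have := congrArg ENNReal.toReal h.symm
  rwa [ENNReal.toReal_sum (fun a _ => measure_ne_top ν _), ENNReal.toReal_one] at this

lemma Jint_toReal_nonneg {ν : Measure ℝ} {N i : ℕ} : 0 ≤ (ν (Jint N i)).toReal :=
  ENNReal.toReal_nonneg

lemma entN_nonneg (ν : Measure ℝ) [IsProbabilityMeasure ν] (N : ℕ) : 0 ≤ entN ν N := by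
  refine Finset.sum_nonneg fun i _ => Real.negMulLog_nonneg ENNReal.toReal_nonneg ?_
  have h1 : ν (Jint N (i : ℕ)) ≤ 1 := prob_le_one
  calc (ν (Jint N (i : ℕ))).toReal ≤ (1 : ℝ≥0∞).toReal :=
        ENNReal.toReal_mono (by norm_num) h1
    _ = 1 := ENNReal.toReal_one

lemma entN_le_log (ν : Measure ℝ) [IsProbabilityMeasure ν]
    (hν : ν (Set.Ico (0 : ℝ) 1) = 1) {N : ℕ} (hN : 0 < N) :
    entN ν N ≤ Real.log N := by
  have h := sum_negMulLog_le_of_card (fun i : Fin N => (ν (Jint N (i : ℕ))).toReal)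
    (fun i => ENNReal.toReal_nonneg) (N : ℝ) (by exact_mod_cast hN) ?_
  · rw [sum_Jint_toReal ν hν hN, Real.negMulLog_one, one_mul, zero_add] at h
    exact h
  · calc ((Finset.univ.filter fun j : Fin N =>
          (ν (Jint N (j : ℕ))).toReal ≠ 0).card : ℝ)
        ≤ ((Finset.univ : Finset (Fin N)).card : ℝ) := by
          exact_mod_cast Finset.card_le_card (Finset.filter_subset _ _)
    _ = (N : ℝ) := by simp

/-- Main comparison lemma on `ℝ`. -/
lemma entN_le (ν : Measure ℝ) [IsProbabilityMeasure ν]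
    (hν : ν (Set.Ico (0 : ℝ) 1) = 1)
    {N₁ N₂ c : ℕ} (hN₁ : 0 < N₁) (hN₂ : 0 < N₂) (hcc : N₂ ≤ c * N₁) :
    entN ν N₂ ≤ entN ν N₁ + Real.log ((c : ℝ) + 1) := by
  classical
  set r : Fin N₁ → Fin N₂ → ℝ :=
    fun i j => (ν (Jint N₁ (i : ℕ) ∩ Jint N₂ (j : ℕ))).toReal with hr
  have hrnn : ∀ i j, 0 ≤ r i j := fun i j => ENNReal.toReal_nonneg
  have hrow : ∀ i : Fin N₁, ∑ j, r i j = (ν (Jint N₁ (i : ℕ))).toReal := by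
    intro i
    have h := measure_eq_sum_inter ν Jint_measurable (Jint_subset hN₁ i.isLt) hN₂
    rw [h, ENNReal.toReal_sum (fun a _ => measure_ne_top ν _)]
  have hcol : ∀ j : Fin N₂, ∑ i, r i j = (ν (Jint N₂ (j : ℕ))).toReal := by
    intro j
    have h := measure_eq_sum_inter ν Jint_measurable (Jint_subset hN₂ j.isLt) hN₁
    rw [h, ENNReal.toReal_sum (fun a _ => measure_ne_top ν _)]
    apply Finset.sum_congr rfl
    intro i _
    rw [hr, Set.inter_comm]
  have hK : (1 : ℝ) ≤ (c : ℝ) + 1 := by linarith [Nat.cast_nonneg (α := ℝ) c]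
  have hsupp : ∀ i : Fin N₁,
      ((Finset.univ.filter fun j => r i j ≠ 0).card : ℝ) ≤ (c : ℝ) + 1 := by
    intro i
    have hcard : (Finset.univ.filter fun j : Fin N₂ => r i j ≠ 0).card
        ≤ (Finset.Icc ((i : ℕ) * N₂ / N₁) ((i : ℕ) * N₂ / N₁ + c)).card := by
      refine Finset.card_le_card_of_injOn (f := fun j => (j : ℕ)) ?_ ?_
      · intro j hj
        rw [Finset.mem_coe, Finset.mem_filter] at hj
        have hne : (Jint N₁ (i : ℕ) ∩ Jint N₂ (j : ℕ)).Nonempty := by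
          rw [Set.nonempty_iff_ne_empty]
          intro hempty
          apply hj.2
          rw [hr]
          simp only [hempty, measure_empty, ENNReal.toReal_zero]
        obtain ⟨hw1, hw2⟩ := window hN₁ hN₂ hcc hne
        rw [Finset.mem_coe, Finset.mem_Icc]
        exact ⟨hw1, hw2⟩
      · intro a _ b _ hab
        exact Fin.ext hab
    rw [Nat.card_Icc] at hcard
    have : (Finset.univ.filter fun j : Fin N₂ => r i j ≠ 0).card ≤ c + 1 := by omega
    exact_mod_cast this
  have hmain := entropy_compare r hrnn ((c : ℝ) + 1) hK hsupp
  calc entN ν N₂ = ∑ j : Fin N₂, Real.negMulLog (∑ i, r i j) := by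
        apply Finset.sum_congr rfl
        intro j _
        rw [hcol j]
    _ ≤ ∑ i : Fin N₁, (Real.negMulLog (∑ j, r i j) + (∑ j, r i j) * Real.log ((c:ℝ)+1)) :=
        hmain
    _ = entN ν N₁ + (∑ i : Fin N₁, (ν (Jint N₁ (i : ℕ))).toReal) * Real.log ((c:ℝ)+1) := by
        rw [Finset.sum_add_distrib, ← Finset.sum_mul]
        congr 1
        · apply Finset.sum_congr rfl; intro i _; rw [hrow i]
        · congr 1; apply Finset.sum_congr rfl; intro i _; rw [hrow i]
    _ = entN ν N₁ + Real.log ((c:ℝ)+1) := by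
        rw [sum_Jint_toReal ν hν hN₁, one_mul]




/-! ### circle to `[0,1)` bridge -/

noncomputable def circG : UnitAddCircle → ℝ :=
  fun x => ((AddCircle.equivIco 1 0 x : ℝ))

lemma measurable_circG : Measurable circG := by
  have : circG = fun x => ((AddCircle.measurableEquivIco (T := 1) 0 x : ℝ)) := rfl
  rw [this]
  exact measurable_subtype_coe.comp (AddCircle.measurableEquivIco (T := 1) 0).measurable

lemma circG_mem (x : UnitAddCircle) : circG x ∈ Set.Ico (0 : ℝ) 1 := by
  have h := (AddCircle.equivIco 1 0 x).2
  simpa [circG] using h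

lemma circG_mk (x : UnitAddCircle) : ((circG x : ℝ) : UnitAddCircle) = x := by
  have : ((circG x : ℝ) : UnitAddCircle) = (AddCircle.equivIco 1 0).symm (AddCircle.equivIco 1 0 x) := rfl
  rw [this, Equiv.symm_apply_apply]

lemma circG_coe {t : ℝ} (ht : t ∈ Set.Ico (0 : ℝ) 1) : circG ((t : ℝ) : UnitAddCircle) = t := by
  have h1 : circG ((t : ℝ) : UnitAddCircle) ∈ Set.Ico (0 : ℝ) 1 := circG_mem _
  have h2 : ((circG ((t : ℝ) : UnitAddCircle) : ℝ) : UnitAddCircle) = ((t : ℝ) : UnitAddCircle) :=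
    circG_mk _
  have ht' : t ∈ Set.Ico (0 : ℝ) (0 + 1) := by simpa using ht
  have h1' : circG ((t : ℝ) : UnitAddCircle) ∈ Set.Ico (0 : ℝ) (0 + 1) := by simpa using h1
  exact (AddCircle.coe_eq_coe_iff_of_mem_Ico h1' ht').mp h2

lemma image_Ico_eq_preimage {a b : ℝ} (ha : 0 ≤ a) (hb : b ≤ 1) :
    (fun t : ℝ => (t : UnitAddCircle)) '' Set.Ico a b = circG ⁻¹' Set.Ico a b := by
  ext x
  constructor
  · rintro ⟨t, ht, rfl⟩
    have ht' : t ∈ Set.Ico (0 : ℝ) 1 := ⟨le_trans ha ht.1, lt_of_lt_of_le ht.2 hb⟩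
    have : circG ((t : ℝ) : UnitAddCircle) = t := circG_coe ht'
    simpa [Set.mem_preimage, this] using ht
  · intro hx
    exact ⟨circG x, hx, circG_mk x⟩

/-! ### word indexing -/

def wEquiv (m n : ℕ) : (Fin n → Fin m) ≃ Fin (m ^ n) :=
  (Equiv.arrowCongr Fin.revPerm (Equiv.refl (Fin m))).trans finFunctionFinEquiv

lemma wEquiv_val {m n : ℕ} (w : Fin n → Fin m) :
    ((wEquiv m n w : Fin (m ^ n)) : ℕ) = ∑ i : Fin n, ((w i : ℕ)) * m ^ ((Fin.rev i : Fin n) : ℕ) := by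
  rw [wEquiv, Equiv.trans_apply, finFunctionFinEquiv_apply]
  rw [← Equiv.sum_comp Fin.revPerm
    (fun i : Fin n => ((Equiv.arrowCongr Fin.revPerm (Equiv.refl (Fin m)) w) i : ℕ) * m ^ (i : ℕ))]
  apply Finset.sum_congr rfl
  intro i _
  simp [Equiv.arrowCongr, Fin.revPerm_symm]

lemma valm_eq {m n : ℕ} (hm : 0 < m) (w : Fin n → Fin m) :
    valm m n w = (((wEquiv m n w : Fin (m ^ n)) : ℕ) : ℝ) / (m : ℝ) ^ n := by
  have hm' : (0 : ℝ) < m := by exact_mod_cast hm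
  rw [wEquiv_val]
  push_cast
  rw [Finset.sum_div]
  rw [valm]
  apply Finset.sum_congr rfl
  intro j _
  have hj : ((j : ℕ) + 1) + (n - 1 - (j : ℕ)) = n := by omega
  have hrev : ((Fin.rev j : Fin n) : ℕ) = n - 1 - (j : ℕ) := by
    rw [Fin.val_rev]; omega
  rw [hrev]
  have hpow : (m : ℝ) ^ n = (m : ℝ) ^ ((j : ℕ) + 1) * (m : ℝ) ^ (n - 1 - (j : ℕ)) := by
    rw [← pow_add, hj]
  rw [hpow]
  field_simp

lemma wEquiv_lt {m n : ℕ} (w : Fin n → Fin m) :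
    ((wEquiv m n w : Fin (m ^ n)) : ℕ) < m ^ n := (wEquiv m n w).isLt

/-! ### relating `measHT` to `entN` -/

lemma measure_ImT (μ : Measure UnitAddCircle) {m n : ℕ} (hm : 0 < m) (w : Fin n → Fin m) :
    μ (ImT m n w) = (μ.map circG) (Jint (m ^ n) ((wEquiv m n w : Fin (m ^ n)) : ℕ)) := by
  have hm' : (0 : ℝ) < m := by exact_mod_cast hm
  have hN' : (0 : ℝ) < (m : ℝ) ^ n := by positivity
  set k : ℕ := ((wEquiv m n w : Fin (m ^ n)) : ℕ) with hk
  have hkN : k < m ^ n := wEquiv_lt w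
  have h1 : valm m n w = (k : ℝ) / (m : ℝ) ^ n := valm_eq hm w
  have h2 : valm m n w + ((m : ℝ) ^ n)⁻¹ = ((k : ℝ) + 1) / (m : ℝ) ^ n := by
    rw [h1]; field_simp
  have hIm : ImT m n w = circG ⁻¹' Jint (m ^ n) k := by
    rw [ImT, h2, h1]
    have hkr : ((k : ℝ) + 1) / (m : ℝ) ^ n ≤ 1 := by
      rw [div_le_one hN']
      have : (k : ℝ) + 1 ≤ ((m : ℝ)) ^ n := by exact_mod_cast hkN
      exact this
    have := image_Ico_eq_preimage (a := (k : ℝ) / (m : ℝ) ^ n)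
      (b := ((k : ℝ) + 1) / (m : ℝ) ^ n) (by positivity) hkr
    rw [this]
    rw [Jint]
    push_cast
    rfl
  rw [hIm, Measure.map_apply measurable_circG Jint_measurable]

lemma measHT_eq (μ : Measure UnitAddCircle) {m : ℕ} (hm : 0 < m) (n : ℕ) :
    measHT μ m n = entN (μ.map circG) (m ^ n) := by
  rw [measHT, entN]
  rw [← Equiv.sum_comp (wEquiv m n)
    (fun i : Fin (m ^ n) => Real.negMulLog (((μ.map circG) (Jint (m ^ n) (i : ℕ))).toReal))]
  apply Finset.sum_congr rfl
  intro w _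
  rw [measure_ImT μ hm w]


theorem main
    (μ' : Measure UnitAddCircle) (hμ' : IsProbabilityMeasure μ')
    (m₁ m₂ l n : ℕ) (h1 : 2 ≤ m₁) (h2 : 2 ≤ m₂) (hl : 0 < l) (hn : 0 < n)
    (hle : m₁ ^ n ≤ m₂ ^ l) (hlt : m₂ ^ l < m₁ ^ (n + 1)) :
    |measHT μ' m₂ l / (l * Real.log m₂) - measHT μ' m₁ n / (n * Real.log m₁)| ≤ 2 / n := by
  classical
  have hg : Measurable circG := measurable_circG
  set ν : Measure ℝ := μ'.map circG with hνdef
  have hνprob : IsProbabilityMeasure ν := Measure.isProbabilityMeasure_map hg.aemeasurable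
  have hν1 : ν (Set.Ico (0 : ℝ) 1) = 1 := by
    rw [hνdef, Measure.map_apply hg measurableSet_Ico]
    have hu : circG ⁻¹' Set.Ico (0 : ℝ) 1 = Set.univ := by
      ext x; simp [circG_mem x]
    rw [hu, measure_univ]
  have hm₁ : 0 < m₁ := by omega
  have hm₂ : 0 < m₂ := by omega
  have hN₁ : 0 < m₁ ^ n := pow_pos hm₁ n
  have hN₂ : 0 < m₂ ^ l := pow_pos hm₂ l
  set A := measHT μ' m₂ l with hA
  set B := measHT μ' m₁ n with hB
  have hAe : A = entN ν (m₂ ^ l) := measHT_eq μ' hm₂ l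
  have hBe : B = entN ν (m₁ ^ n) := measHT_eq μ' hm₁ n
  have hm₁' : (1 : ℝ) < m₁ := by exact_mod_cast h1.trans_lt' one_lt_two
  have hm₂' : (1 : ℝ) < m₂ := by exact_mod_cast h2.trans_lt' one_lt_two
  have hlog₁ : 0 < Real.log m₁ := Real.log_pos hm₁'
  have hlog₂ : 0 < Real.log m₂ := Real.log_pos hm₂'
  have hn' : (0 : ℝ) < n := by exact_mod_cast hn
  have hl' : (0 : ℝ) < l := by exact_mod_cast hl
  set L₁ : ℝ := (n : ℝ) * Real.log (m₁ : ℝ) with hL₁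
  set L₂ : ℝ := (l : ℝ) * Real.log (m₂ : ℝ) with hL₂
  have hL₁pos : 0 < L₁ := mul_pos hn' hlog₁
  have hL₂pos : 0 < L₂ := mul_pos hl' hlog₂
  have h12 : L₁ ≤ L₂ := by
    have hcast : ((m₁ : ℝ)) ^ n ≤ ((m₂ : ℝ)) ^ l := by exact_mod_cast hle
    have := Real.log_le_log (by positivity) hcast
    rwa [Real.log_pow, Real.log_pow] at this
  have h21 : L₂ ≤ L₁ + Real.log m₁ := by
    have hcast : ((m₂ : ℝ)) ^ l ≤ ((m₁ : ℝ)) ^ (n + 1) := by exact_mod_cast le_of_lt hlt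
    have := Real.log_le_log (by positivity) hcast
    rw [Real.log_pow, Real.log_pow] at this
    push_cast at this
    rw [hL₁, hL₂]
    linarith
  have hA0 : 0 ≤ A := by rw [hAe]; exact entN_nonneg ν _
  have hB0 : 0 ≤ B := by rw [hBe]; exact entN_nonneg ν _
  have hAleL : A ≤ L₂ := by
    rw [hAe]
    calc entN ν (m₂ ^ l) ≤ Real.log ((m₂ ^ l : ℕ) : ℝ) := entN_le_log ν hν1 hN₂
      _ = L₂ := by push_cast; rw [Real.log_pow]
  have hAB : A ≤ B + 2 * Real.log m₁ := by
    have hcc : m₂ ^ l ≤ m₁ * m₁ ^ n := by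
      have hpow : m₁ ^ (n + 1) = m₁ * m₁ ^ n := by ring
      omega
    have h := entN_le ν hν1 hN₁ hN₂ hcc
    have hlog : Real.log ((m₁ : ℝ) + 1) ≤ 2 * Real.log m₁ := by
      have h2' : (2 : ℝ) ≤ m₁ := by exact_mod_cast h1
      have hsq : (m₁ : ℝ) + 1 ≤ (m₁ : ℝ) ^ 2 := by nlinarith
      calc Real.log ((m₁ : ℝ) + 1) ≤ Real.log ((m₁ : ℝ) ^ 2) :=
            Real.log_le_log (by positivity) hsq
        _ = 2 * Real.log m₁ := by rw [Real.log_pow]; push_cast; ring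
    rw [hAe, hBe]
    linarith
  have hBA : B ≤ A + Real.log m₁ := by
    have hcc : m₁ ^ n ≤ 1 * m₂ ^ l := by omega
    have h := entN_le ν hν1 hN₂ hN₁ hcc
    have hlog : Real.log ((1 : ℕ) + 1 : ℝ) ≤ Real.log m₁ := by
      apply Real.log_le_log (by norm_num)
      have : (2 : ℝ) ≤ m₁ := by exact_mod_cast h1
      push_cast
      linarith
    rw [hAe, hBe]
    push_cast at h hlog
    linarith
  clear_value A B L₁ L₂
  rw [abs_le]
  have e5 : Real.log m₁ / L₁ = 1 / n := by
    rw [hL₁, div_eq_div_iff (by positivity) (ne_of_gt hn')]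
    ring
  constructor
  · have e0 : L₂ - L₁ ≤ Real.log m₁ := by linarith
    have e1 : A / L₁ - A / L₂ = A * (L₂ - L₁) / (L₁ * L₂) := by
      field_simp
    have e2 : A * (L₂ - L₁) ≤ L₂ * Real.log m₁ :=
      mul_le_mul hAleL e0 (by linarith) (le_of_lt hL₂pos)
    have e3 : A * (L₂ - L₁) / (L₁ * L₂) ≤ L₂ * Real.log m₁ / (L₁ * L₂) := by
      gcongr
    have e4 : L₂ * Real.log m₁ / (L₁ * L₂) = Real.log m₁ / L₁ := by
      field_simp
    have e6 : B / L₁ ≤ A / L₁ + Real.log m₁ / L₁ := by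
      rw [← add_div]
      gcongr
    have eA : A / L₁ - A / L₂ ≤ 1 / (n : ℝ) := by
      rw [e1]; exact e3.trans_eq (e4.trans e5)
    have e7 : B / L₁ ≤ A / L₁ + 1 / (n : ℝ) := by rw [← e5]; exact e6
    have h2n : (2 : ℝ) / (n : ℝ) = 1 / (n : ℝ) + 1 / (n : ℝ) := by ring
    have key : B / L₁ - A / L₂ ≤ 2 / (n : ℝ) := by rw [h2n]; linarith [e7, eA]
    linarith [key]
  · have e6 : B / L₂ ≤ B / L₁ := by gcongr
    have e7 : A / L₂ - B / L₁ ≤ (A - B) / L₂ := by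
      rw [sub_div]
      linarith
    have e8 : (A - B) / L₂ ≤ (2 * Real.log m₁) / L₂ := by
      gcongr
      linarith
    have e9 : (2 * Real.log m₁) / L₂ ≤ (2 * Real.log m₁) / L₁ := by gcongr
    have e10 : (2 * Real.log m₁) / L₁ = 2 / n := by
      rw [hL₁, div_eq_div_iff (by positivity) (ne_of_gt hn')]
      ring
    exact e7.trans ((e8.trans e9).trans_eq e10)

end RenyiAux

/-- quantitative comparison of normalized partition entropies in two bases. -/
theorem renyi_base_comparison
    (μ' : Measure UnitAddCircle) (hμ' : IsProbabilityMeasure μ')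
    (m₁ m₂ l n : ℕ) (h1 : 2 ≤ m₁) (h2 : 2 ≤ m₂) (hl : 0 < l) (hn : 0 < n)
    (hle : m₁ ^ n ≤ m₂ ^ l) (hlt : m₂ ^ l < m₁ ^ (n + 1)) :
    |measHT μ' m₂ l / (l * Real.log m₂) - measHT μ' m₁ n / (n * Real.log m₁)| ≤ 2 / n := by
  exact RenyiAux.main μ' hμ' m₁ m₂ l n h1 h2 hl hn hle hlt

end
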